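/- Every oval of PG(2,4) is a conic. Equivalently, up to the action of PGL(3,4), there is a unique oval in PG(2,4), namely {(1,t,t^2) : t ∈ GF(4)} ∪ {(0,0,1)}. -/

import Mathlib

open Projectivization
open scoped LinearAlgebra.Projectivization

variable (F : Type*) [Field F]

lemma vec_ne_zero₀ (t u : F) : (![1, t, u] : Fin 3 → F) ≠ 0 := by
  intro h; simpa using congrFun h 0

lemma vec_ne_zero₂ : (![0, 0, 1] : Fin 3 → F) ≠ 0 := by
  intro h; simpa using congrFun h 2

/-- An oval in `PG(2, q)`: a set of `q + 1` points, no three of which are collinear. -/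
def IsOval (q : ℕ) (S : Set (ℙ F (Fin 3 → F))) : Prop :=
  Nat.card S = q + 1 ∧
  ∀ p₁ ∈ S, ∀ p₂ ∈ S, ∀ p₃ ∈ S, p₁ ≠ p₂ → p₁ ≠ p₃ → p₂ ≠ p₃ →
    Independent ![p₁, p₂, p₃]

/-- The conic `{(1, t, t²) : t ∈ GF(q)} ∪ {(0, 0, 1)}` of `PG(2, q)`. -/
def conic : Set (ℙ F (Fin 3 → F)) :=
  {p | ∃ t : F, p = Projectivization.mk F ![1, t, t ^ 2] (vec_ne_zero₀ F t (t ^ 2))} ∪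
    {Projectivization.mk F ![0, 0, 1] (vec_ne_zero₂ F)}

/- ### Auxiliary lemmas -/

lemma mk_congr {v w : Fin 3 → F} (hv : v ≠ 0) (hw : w ≠ 0) (h : v = w) :
    Projectivization.mk F v hv = Projectivization.mk F w hw := by subst h; rfl

lemma mk_eq_of_smul {v w : Fin 3 → F} (hv : v ≠ 0) (hw : w ≠ 0) {a : F} (ha : a ≠ 0)
    (h : a • w = v) : Projectivization.mk F v hv = Projectivization.mk F w hw :=
  (Projectivization.mk_eq_mk_iff' F v w hv hw).mpr ⟨a, h⟩

lemma indep_reps {p₁ p₂ p₃ : ℙ F (Fin 3 → F)} (h : Independent ![p₁, p₂, p₃]) :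
    LinearIndependent F ![p₁.rep, p₂.rep, p₃.rep] := by
  rw [Projectivization.independent_iff] at h
  have he : Projectivization.rep ∘ ![p₁, p₂, p₃] = ![p₁.rep, p₂.rep, p₃.rep] := by
    funext i; fin_cases i <;> rfl
  rwa [he] at h

lemma not_li_of_comb {x y w : Fin 3 → F} (a b : F) (hw : w = a • x + b • y) :
    ¬ LinearIndependent F ![x, y, w] := by
  intro h
  have h3 := Fintype.linearIndependent_iff.mp h ![a, b, -1] ?_
  · simpa using h3 2
  · rw [Fin.sum_univ_three]
    simp only [Matrix.cons_val_zero, Matrix.cons_val_one, Matrix.head_cons,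
      Matrix.cons_val_two, Matrix.tail_cons]
    rw [hw]; module

lemma li_smul {x y z : Fin 3 → F} (h : LinearIndependent F ![x, y, z]) {a b c : F}
    (ha : a ≠ 0) (hb : b ≠ 0) (hc : c ≠ 0) :
    LinearIndependent F ![a • x, b • y, c • z] := by
  rw [Fintype.linearIndependent_iff] at h ⊢
  intro g hg
  have h0 := h ![g 0 * a, g 1 * b, g 2 * c] ?_
  · intro i
    fin_cases i
    · have := h0 0; simp only [Matrix.cons_val_zero] at this
      rcases mul_eq_zero.mp this with h' | h'
      · exact h'
      · exact absurd h' ha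
    · have := h0 1; simp only [Matrix.cons_val_one, Matrix.head_cons] at this
      rcases mul_eq_zero.mp this with h' | h'
      · exact h'
      · exact absurd h' hb
    · have := h0 2
      simp only [Matrix.cons_val_two, Matrix.tail_cons, Matrix.head_cons] at this
      rcases mul_eq_zero.mp this with h' | h'
      · exact h'
      · exact absurd h' hc
  · rw [Fin.sum_univ_three] at hg ⊢
    simp only [Matrix.cons_val_zero, Matrix.cons_val_one, Matrix.head_cons,
      Matrix.cons_val_two, Matrix.tail_cons] at hg ⊢
    rw [mul_smul, mul_smul, mul_smul]
    exact hg

lemma two_eq_zero [Fintype F] (hF : Fintype.card F = 4) : (2 : F) = 0 := by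
  haveI := ringChar.charP F
  obtain ⟨n, hp, hcard⟩ := FiniteField.card F (ringChar F)
  have hdvd : ringChar F ∣ 4 := by
    rw [hF] at hcard
    exact hcard ▸ dvd_pow_self (ringChar F) n.pos.ne'
  have h2 : ringChar F = 2 := by
    have h4 : (4 : ℕ) = 2 ^ 2 := by norm_num
    rw [h4] at hdvd
    have : ringChar F ∣ 2 := hp.dvd_of_dvd_pow hdvd
    exact (Nat.prime_dvd_prime_iff_eq hp Nat.prime_two).mp this
  have := CharP.cast_eq_zero F (ringChar F)
  rw [h2] at this
  exact_mod_cast this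

/-- The key auxiliary projectivity, as a linear equivalence. -/
def auxEquiv (t : F) (h2 : (2 : F) = 0) : (Fin 3 → F) ≃ₗ[F] (Fin 3 → F) where
  toFun v := ![v 1, (t + 1) * v 1 + v 2, v 0 + t * v 1]
  invFun w := ![t * w 0 + w 2, w 0, (t + 1) * w 0 + w 1]
  map_add' x y := by
    funext i
    fin_cases i <;> simp <;> ring
  map_smul' m x := by
    funext i
    fin_cases i <;> simp <;> ring
  left_inv x := by
    funext i
    fin_cases i <;> simp
    · linear_combination (t * x 1) * h2
    · linear_combination ((t + 1) * x 1) * h2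
  right_inv w := by
    funext i
    fin_cases i <;> simp
    · linear_combination ((t + 1) * w 0) * h2
    · linear_combination (t * w 0) * h2

lemma auxEquiv_apply (t : F) (h2 : (2 : F) = 0) (v : Fin 3 → F) :
    auxEquiv F t h2 v = ![v 1, (t + 1) * v 1 + v 2, v 0 + t * v 1] := rfl

lemma basis_equiv_apply (B' : Module.Basis (Fin 3) F (Fin 3 → F)) (x y z : F) :
    (Pi.basisFun F (Fin 3)).equiv B' (Equiv.refl _) ![x, y, z] =
      x • B' 0 + y • B' 1 + z • B' 2 := by
  have h : (![x, y, z] : Fin 3 → F) =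
      x • (Pi.basisFun F (Fin 3)) 0 + y • (Pi.basisFun F (Fin 3)) 1 +
        z • (Pi.basisFun F (Fin 3)) 2 := by
    funext i
    fin_cases i <;> simp [Pi.basisFun_apply]
  rw [h, map_add, map_add, map_smul, map_smul, map_smul, Module.Basis.equiv_apply,
    Module.Basis.equiv_apply, Module.Basis.equiv_apply]
  simp

/-- Every oval of `PG(2, 4)` is a conic: up to the action of `PGL(3, 4)`, there is a
unique oval in `PG(2, 4)`, namely `{(1, t, t²) : t ∈ GF(4)} ∪ {(0, 0, 1)}`. -/
theorem oval_of_pg2_4_is_conic [Fintype F] (hF : Fintype.card F = 4)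
    (S : Set (ℙ F (Fin 3 → F))) (hS : IsOval F 4 S) :
    ∃ g : (Fin 3 → F) ≃ₗ[F] (Fin 3 → F),
      Projectivization.map g.toLinearMap g.injective '' conic F = S := by
  classical
  obtain ⟨hcard, hind⟩ := hS
  have h2 : (2 : F) = 0 := two_eq_zero F hF
  -- extract five distinct points of S
  haveI : Finite (ℙ F (Fin 3 → F)) := Quotient.finite _
  have hfin : S.Finite := Set.toFinite S
  haveI : Fintype ↥S := hfin.fintype
  have hc5 : Fintype.card ↥S = 5 := by
    rw [← Nat.card_eq_fintype_card, hcard]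
  set e := Fintype.equivFinOfCardEq hc5 with he
  set q : Fin 5 → ℙ F (Fin 3 → F) := fun i => ((e.symm i : ↥S) : ℙ F (Fin 3 → F)) with hqdef
  have hqS : ∀ i, q i ∈ S := fun i => (e.symm i).2
  have hqinj : Function.Injective q := fun i j h =>
    e.symm.injective (Subtype.coe_injective h)
  have hInd3 : ∀ i j k : Fin 5, i ≠ j → i ≠ k → j ≠ k →
      LinearIndependent F ![(q i).rep, (q j).rep, (q k).rep] := fun i j k hij hik hjk =>
    indep_reps F (hind _ (hqS i) _ (hqS j) _ (hqS k)
      (fun h => hij (hqinj h)) (fun h => hik (hqinj h)) (fun h => hjk (hqinj h)))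
  set v0 := (q 0).rep with hv0
  set v1 := (q 1).rep with hv1
  set v2 := (q 2).rep with hv2
  set v3 := (q 3).rep with hv3
  set v4 := (q 4).rep with hv4
  -- basis from the first three points
  have hli : LinearIndependent F ![v0, v1, v2] := hInd3 0 1 2 (by decide) (by decide) (by decide)
  have hcard3 : Fintype.card (Fin 3) = Module.finrank F (Fin 3 → F) := by
    simp [Module.finrank_fin_fun]
  set B := basisOfLinearIndependentOfCardEqFinrank hli hcard3 with hB
  have hBc : ⇑B = ![v0, v1, v2] := coe_basisOfLinearIndependentOfCardEqFinrank hli hcard3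
  set a := B.repr v3 0 with ha_def
  set b := B.repr v3 1 with hb_def
  set c := B.repr v3 2 with hc_def
  have hBsum : a • v0 + b • v1 + c • v2 = v3 := by
    have hs := B.sum_repr v3
    rw [Fin.sum_univ_three] at hs
    rw [ha_def, hb_def, hc_def]
    convert hs using 3 <;> rw [hBc] <;> simp
  have ha : a ≠ 0 := by
    intro h
    exact not_li_of_comb F b c (by simp only [← hv0, ← hv1, ← hv2, ← hv3, ← hv4]; rw [← hBsum, h]; module)
      (hInd3 1 2 3 (by decide) (by decide) (by decide))
  have hb : b ≠ 0 := by
    intro h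
    exact not_li_of_comb F a c (by simp only [← hv0, ← hv1, ← hv2, ← hv3, ← hv4]; rw [← hBsum, h]; module)
      (hInd3 0 2 3 (by decide) (by decide) (by decide))
  have hc : c ≠ 0 := by
    intro h
    exact not_li_of_comb F a b (by simp only [← hv0, ← hv1, ← hv2, ← hv3, ← hv4]; rw [← hBsum, h]; module)
      (hInd3 0 1 3 (by decide) (by decide) (by decide))
  -- scaled basis
  have hli' : LinearIndependent F ![a • v0, b • v1, c • v2] := li_smul F hli ha hb hc
  set B' := basisOfLinearIndependentOfCardEqFinrank hli' hcard3 with hB'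
  have hB'c : ⇑B' = ![a • v0, b • v1, c • v2] :=
    coe_basisOfLinearIndependentOfCardEqFinrank hli' hcard3
  set α := B'.repr v4 0 with hα_def
  set β := B'.repr v4 1 with hβ_def
  set γ := B'.repr v4 2 with hγ_def
  have hB'sum : α • (a • v0) + β • (b • v1) + γ • (c • v2) = v4 := by
    have hs := B'.sum_repr v4
    rw [Fin.sum_univ_three] at hs
    rw [hα_def, hβ_def, hγ_def]
    convert hs using 3 <;> rw [hB'c] <;> simp
  have hα : α ≠ 0 := by
    intro h
    exact not_li_of_comb F (β * b) (γ * c) (by simp only [← hv0, ← hv1, ← hv2, ← hv3, ← hv4]; rw [← hB'sum, h]; module)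
      (hInd3 1 2 4 (by decide) (by decide) (by decide))
  have hβ : β ≠ 0 := by
    intro h
    exact not_li_of_comb F (α * a) (γ * c) (by simp only [← hv0, ← hv1, ← hv2, ← hv3, ← hv4]; rw [← hB'sum, h]; module)
      (hInd3 0 2 4 (by decide) (by decide) (by decide))
  have hγ : γ ≠ 0 := by
    intro h
    exact not_li_of_comb F (α * a) (β * b) (by simp only [← hv0, ← hv1, ← hv2, ← hv3, ← hv4]; rw [← hB'sum, h]; module)
      (hInd3 0 1 4 (by decide) (by decide) (by decide))
  have hαβ : α ≠ β := by
    intro h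
    exact not_li_of_comb F ((γ - α) * c) α
      (by simp only [← hv0, ← hv1, ← hv2, ← hv3, ← hv4]; rw [← hB'sum, ← hBsum, h]; module)
      (hInd3 2 3 4 (by decide) (by decide) (by decide))
  have hαγ : α ≠ γ := by
    intro h
    exact not_li_of_comb F ((β - α) * b) α
      (by simp only [← hv0, ← hv1, ← hv2, ← hv3, ← hv4]; rw [← hB'sum, ← hBsum, h]; module)
      (hInd3 1 3 4 (by decide) (by decide) (by decide))
  have hβγ : β ≠ γ := by
    intro h
    exact not_li_of_comb F ((α - β) * a) β
      (by simp only [← hv0, ← hv1, ← hv2, ← hv3, ← hv4]; rw [← hB'sum, ← hBsum, h]; module)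
      (hInd3 0 3 4 (by decide) (by decide) (by decide))
  -- normalize the fifth point
  set t := α⁻¹ * β with ht_def
  set u := α⁻¹ * γ with hu_def
  have hαt : α * t = β := by rw [ht_def, ← mul_assoc, mul_inv_cancel₀ hα, one_mul]
  have hαu : α * u = γ := by rw [hu_def, ← mul_assoc, mul_inv_cancel₀ hα, one_mul]
  have ht0 : t ≠ 0 := by
    intro h; apply hβ; rw [← hαt, h, mul_zero]
  have ht1 : t ≠ 1 := by
    intro h; apply hαβ; rw [← hαt, h, mul_one]
  have hu0 : u ≠ 0 := by
    intro h; apply hγ; rw [← hαu, h, mul_zero]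
  have hu1 : u ≠ 1 := by
    intro h; apply hαγ; rw [← hαu, h, mul_one]
  have hut : u ≠ t := by
    intro h; apply hβγ; rw [← hαt, ← hαu, h]
  -- field facts
  have ht3 : t ^ 3 = 1 := by
    have := FiniteField.pow_card_sub_one_eq_one t ht0
    rwa [hF] at this
  have hq1 : t ^ 2 + t + 1 = 0 := by
    have hfac : (t + 1) * (t ^ 2 + t + 1) = 0 := by
      linear_combination ht3 + (t ^ 2 + t + 1) * h2
    rcases mul_eq_zero.mp hfac with h' | h'
    · exfalso; apply ht1; linear_combination h' - h2
    · exact h'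
  have ht2_0 : t ^ 2 ≠ 0 := pow_ne_zero _ ht0
  have ht2_1 : t ^ 2 ≠ 1 := by
    intro h; apply ht0; linear_combination hq1 - h - h2
  have ht2_t : t ^ 2 ≠ t := by
    intro h
    have : (1 : F) = 0 := by linear_combination hq1 - h - t * h2
    exact one_ne_zero this
  have hset : ({0, 1, t, t ^ 2} : Finset F) = Finset.univ := by
    apply Finset.eq_univ_of_card
    rw [hF]
    rw [Finset.card_insert_of_notMem, Finset.card_insert_of_notMem,
      Finset.card_insert_of_notMem, Finset.card_singleton]
    · simp only [Finset.mem_singleton]; exact fun h => ht2_t h.symm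
    · simp only [Finset.mem_insert, Finset.mem_singleton]
      push_neg
      exact ⟨fun h => ht1 h.symm, fun h => ht2_1 h.symm⟩
    · simp only [Finset.mem_insert, Finset.mem_singleton]
      push_neg
      exact ⟨fun h => one_ne_zero (h.symm), fun h => ht0 h.symm, fun h => ht2_0 h.symm⟩
  have huniv : ∀ x : F, x = 0 ∨ x = 1 ∨ x = t ∨ x = t ^ 2 := by
    intro x
    have hx := Finset.mem_univ x
    rw [← hset] at hx
    simpa using hx
  have hu2 : u = t ^ 2 := by
    rcases huniv u with h | h | h | h
    · exact absurd h hu0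
    · exact absurd h hu1
    · exact absurd h hut
    · exact h
  have hαt2 : α * t ^ 2 = γ := by rw [← hu2]; exact hαu
  -- the projectivity
  set g : (Fin 3 → F) ≃ₗ[F] (Fin 3 → F) :=
    (auxEquiv F t h2).trans ((Pi.basisFun F (Fin 3)).equiv B' (Equiv.refl _)) with hg
  have hkey : ∀ x y z : F, g.toLinearMap ![x, y, z] =
      y • (a • v0) + ((t + 1) * y + z) • (b • v1) + (x + t * y) • (c • v2) := by
    intro x y z
    have h1 : g.toLinearMap ![x, y, z] =
        (Pi.basisFun F (Fin 3)).equiv B' (Equiv.refl _) (auxEquiv F t h2 ![x, y, z]) := rfl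
    rw [h1, auxEquiv_apply]
    simp only [Matrix.cons_val_zero, Matrix.cons_val_one, Matrix.head_cons,
      Matrix.cons_val_two, Matrix.tail_cons]
    rw [basis_equiv_apply]
    have e0 : B' 0 = a • v0 := by rw [hB'c]; simp
    have e1 : B' 1 = b • v1 := by rw [hB'c]; simp
    have e2 : B' 2 = c • v2 := by rw [hB'c]; simp
    rw [e0, e1, e2]
  -- a generic step lemma
  have hstep : ∀ (w x : Fin 3 → F) (hw : w ≠ 0) (hx : x ≠ 0) (s : F), s ≠ 0 →
      g.toLinearMap w = s • x →
      Projectivization.map g.toLinearMap g.injective (Projectivization.mk F w hw) =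
        Projectivization.mk F x hx := by
    intro w x hw hx s hs h
    rw [Projectivization.map_mk]
    exact mk_eq_of_smul F _ hx hs h.symm
  -- images of the five conic points
  have himg0 : Projectivization.map g.toLinearMap g.injective
      (Projectivization.mk F ![1, (0 : F), 0 ^ 2] (vec_ne_zero₀ F 0 (0 ^ 2))) = q 2 := by
    refine (hstep _ _ _ ((q 2).rep_nonzero) c hc ?_).trans (Projectivization.mk_rep (q 2))
    simp only [← hv0, ← hv1, ← hv2, ← hv3, ← hv4]
    rw [hkey]
    match_scalars <;> ring
  have himg1 : Projectivization.map g.toLinearMap g.injective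
      (Projectivization.mk F ![1, (1 : F), 1 ^ 2] (vec_ne_zero₀ F 1 (1 ^ 2))) = q 4 := by
    refine (hstep _ _ _ ((q 4).rep_nonzero) α⁻¹ (inv_ne_zero hα) ?_).trans
      (Projectivization.mk_rep (q 4))
    simp only [← hv0, ← hv1, ← hv2, ← hv3, ← hv4]
    have hv4' : v4 = α • ((1 : F) • (a • v0) + t • (b • v1) + t ^ 2 • (c • v2)) := by
      rw [← hB'sum]
      match_scalars
      · ring
      · linear_combination b * hαt.symm
      · linear_combination c * hαt2.symm
    rw [hkey, hv4', smul_smul α⁻¹ α, inv_mul_cancel₀ hα, one_smul]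
    match_scalars
    · ring
    · linear_combination b * h2
    · linear_combination (-c) * hq1 + (c * t + c) * h2
  have himgt : Projectivization.map g.toLinearMap g.injective
      (Projectivization.mk F ![1, t, t ^ 2] (vec_ne_zero₀ F t (t ^ 2))) = q 3 := by
    refine (hstep _ _ _ ((q 3).rep_nonzero) t ht0 ?_).trans (Projectivization.mk_rep (q 3))
    simp only [← hv0, ← hv1, ← hv2, ← hv3, ← hv4]
    rw [hkey, ← hBsum]
    match_scalars
    · ring
    · linear_combination (t ^ 2 * b) * h2
    · linear_combination c * hq1 + (-c * t) * h2
  have himgt2 : Projectivization.map g.toLinearMap g.injective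
      (Projectivization.mk F ![1, t ^ 2, (t ^ 2) ^ 2] (vec_ne_zero₀ F (t ^ 2) ((t ^ 2) ^ 2)))
      = q 0 := by
    refine (hstep _ _ _ ((q 0).rep_nonzero) (t ^ 2 * a) (mul_ne_zero ht2_0 ha) ?_).trans
      (Projectivization.mk_rep (q 0))
    simp only [← hv0, ← hv1, ← hv2, ← hv3, ← hv4]
    rw [hkey]
    match_scalars
    · ring
    · linear_combination (b * t ^ 2) * hq1
    · linear_combination (c * (t + 1)) * hq1 + (-c * t ^ 2 - c * t) * h2
  have himginf : Projectivization.map g.toLinearMap g.injective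
      (Projectivization.mk F ![0, 0, 1] (vec_ne_zero₂ F)) = q 1 := by
    refine (hstep _ _ _ ((q 1).rep_nonzero) b hb ?_).trans (Projectivization.mk_rep (q 1))
    simp only [← hv0, ← hv1, ← hv2, ← hv3, ← hv4]
    rw [show (![0, 0, 1] : Fin 3 → F) = ![(0 : F), 0, 1] from rfl, hkey]
    match_scalars <;> ring
  -- the image of the conic is {q 0, ..., q 4}
  refine ⟨g, ?_⟩
  have himage : Projectivization.map g.toLinearMap g.injective '' conic F =
      ({q 0, q 1, q 2, q 3, q 4} : Set (ℙ F (Fin 3 → F))) := by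
    apply Set.Subset.antisymm
    · rintro _ ⟨pt, hpt, rfl⟩
      rcases hpt with ⟨w, rfl⟩ | rfl
      · rcases huniv w with rfl | rfl | rfl | rfl
        · rw [himg0]; simp
        · rw [himg1]; simp
        · rw [himgt]; simp
        · rw [himgt2]; simp
      · rw [himginf]; simp
    · rintro x hx
      rcases hx with rfl | rfl | rfl | rfl | rfl
      · exact ⟨_, Or.inl ⟨t ^ 2, rfl⟩, himgt2⟩
      · exact ⟨_, Or.inr rfl, himginf⟩
      · exact ⟨_, Or.inl ⟨0, rfl⟩, himg0⟩
      · exact ⟨_, Or.inl ⟨t, rfl⟩, himgt⟩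
      · exact ⟨_, Or.inl ⟨1, rfl⟩, himg1⟩
  rw [himage]
  -- {q 0, ..., q 4} = S by cardinality
  refine Set.eq_of_subset_of_ncard_le ?_ ?_ (Set.toFinite S)
  · rintro x (rfl | rfl | rfl | rfl | rfl)
    · exact hqS 0
    · exact hqS 1
    · exact hqS 2
    · exact hqS 3
    · exact hqS 4
  · have hS5 : S.ncard = 5 := by rw [← Nat.card_coe_set_eq, hcard]
    have hT5 : ({q 0, q 1, q 2, q 3, q 4} : Set (ℙ F (Fin 3 → F))).ncard = 5 := by
      rw [Set.ncard_insert_of_notMem, Set.ncard_insert_of_notMem,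
        Set.ncard_insert_of_notMem, Set.ncard_insert_of_notMem, Set.ncard_singleton]
      · simp only [Set.mem_singleton_iff]
        exact hqinj.ne (by decide)
      · simp only [Set.mem_insert_iff, Set.mem_singleton_iff]
        push_neg
        exact ⟨hqinj.ne (by decide), hqinj.ne (by decide)⟩
      · simp only [Set.mem_insert_iff, Set.mem_singleton_iff]
        push_neg
        exact ⟨hqinj.ne (by decide), hqinj.ne (by decide), hqinj.ne (by decide)⟩
      · simp only [Set.mem_insert_iff, Set.mem_singleton_iff]
        push_neg
        exact ⟨hqinj.ne (by decide), hqinj.ne (by decide), hqinj.ne (by decide),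
          hqinj.ne (by decide)⟩
    rw [hS5, hT5]
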